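/- First self-intersection of a projective curve forces a vanishing solution: let f : [0,T) → ℝP¹ be continuous, smooth and immersive on (0,T), with Schwarzian derivative 2q where q(t) = −3/(4t²) + q̃(t) for some q̃ continuous on [0,T). If f(0) = f(t*) for some t* ∈ (0,T), then there exists a nontrivial solution u of u'' + q·u = 0 on (0,T) with lim_{t→0⁺} u(t) = 0 and u(t*) = 0. -/

import Mathlib

open Set Filter Topology

/-- The real projective line carries the quotient topology from `ℝ² \\ {0}`. -/
noncomputable instance : TopologicalSpace (Projectivization ℝ (ℝ × ℝ)) :=
  inferInstanceAs (TopologicalSpace (Quotient (projectivizationSetoid ℝ (ℝ × ℝ))))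

lemma sq_add_sq_pos' {v : ℝ × ℝ} (hv : v ≠ 0) : 0 < v.1 ^ 2 + v.2 ^ 2 := by
  rcases eq_or_ne v.1 0 with h1 | h1
  · have h2 : v.2 ≠ 0 := fun h2 => hv (Prod.ext h1 h2)
    have := pow_pos (abs_pos.2 h2) 2
    nlinarith [sq_nonneg v.1, sq_abs v.2]
  · nlinarith [sq_nonneg v.2, pow_pos (abs_pos.2 h1) 2, sq_abs v.1]

noncomputable def phiAux (A B : ℝ) : Projectivization ℝ (ℝ × ℝ) → ℝ :=
  Quotient.lift (fun v : { w : ℝ × ℝ // w ≠ 0 } =>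
      (A * v.1.1 - B * v.1.2) ^ 2 / (v.1.1 ^ 2 + v.1.2 ^ 2)) <| by
    rintro a b hab
    obtain ⟨c, hc⟩ := hab
    have hc1 : (c : ℝ) * b.1.1 = a.1.1 := by
      have := congrArg Prod.fst hc; simpa [Units.smul_def] using this
    have hc2 : (c : ℝ) * b.1.2 = a.1.2 := by
      have := congrArg Prod.snd hc; simpa [Units.smul_def] using this
    have hb := sq_add_sq_pos' b.2
    have hcz : (c : ℝ) ≠ 0 := c.ne_zero
    rw [← hc1, ← hc2]
    have hcsq : (0:ℝ) < (c:ℝ) ^ 2 := by positivity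
    have h3 : ((c:ℝ) * b.1.1) ^ 2 + ((c:ℝ) * b.1.2) ^ 2
        = (c:ℝ) ^ 2 * (b.1.1 ^ 2 + b.1.2 ^ 2) := by ring
    rw [div_eq_div_iff (by rw [h3]; exact (mul_pos hcsq hb).ne') hb.ne']
    ring

lemma phiAux_mk (A B : ℝ) (v : ℝ × ℝ) (hv : v ≠ 0) :
    phiAux A B (Projectivization.mk ℝ v hv) = (A * v.1 - B * v.2) ^ 2 / (v.1 ^ 2 + v.2 ^ 2) := rfl

lemma phiAux_continuous (A B : ℝ) : Continuous (phiAux A B) := by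
  apply Continuous.quotient_lift
  apply Continuous.div
  · fun_prop
  · fun_prop
  · exact fun v => (sq_add_sq_pos' v.2).ne'

lemma phi_scale (A B k x y : ℝ) (hk : k ≠ 0) (hxy : 0 < x ^ 2 + y ^ 2) :
    (A * (k * x) - B * (k * y)) ^ 2 / ((k * x) ^ 2 + (k * y) ^ 2)
      = (A * x - B * y) ^ 2 / (x ^ 2 + y ^ 2) := by
  have h2 : (k * x) ^ 2 + (k * y) ^ 2 = k ^ 2 * (x ^ 2 + y ^ 2) := by ring
  rw [h2, div_eq_div_iff (mul_ne_zero (pow_ne_zero 2 hk) hxy.ne') hxy.ne']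
  ring

lemma constOn_aux {F : ℝ → ℝ} {a b t₀ : ℝ}
    (hF : ContinuousOn F (Set.Ioo a b))
    (hd : ∀ t ∈ Set.Ioo a b, t ≠ t₀ → HasDerivAt F 0 t) :
    ∀ x ∈ Set.Ioo a b, ∀ y ∈ Set.Ioo a b, F x = F y := by
  have sub : ∀ x y : ℝ, x ∈ Set.Ioo a b → y ∈ Set.Ioo a b → x ≤ y → t₀ ∉ Set.Ico x y →
      F y = F x := by
    intro x y hx hy hxy ht
    have hIcc : Set.Icc x y ⊆ Set.Ioo a b :=
      fun t htt => ⟨lt_of_lt_of_le hx.1 htt.1, lt_of_le_of_lt htt.2 hy.2⟩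
    refine constant_of_has_deriv_right_zero (hF.mono hIcc) (fun z hz => ?_) y
      (Set.right_mem_Icc.2 hxy)
    exact (hd z (hIcc ⟨hz.1, hz.2.le⟩) (fun h => ht (h ▸ hz))).hasDerivWithinAt
  have claim : ∀ x y : ℝ, x ∈ Set.Ioo a b → y ∈ Set.Ioo a b → x ≤ y → F x = F y := by
    intro x y hx hy hxy
    by_cases ht : t₀ ∈ Set.Ico x y
    · have ht0 : t₀ ∈ Set.Ioo a b := ⟨lt_of_lt_of_le hx.1 ht.1, lt_trans ht.2 hy.2⟩
      have h1 : F t₀ = F x := sub x t₀ hx ht0 ht.1 (fun h => lt_irrefl t₀ h.2)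
      have hcont : ContinuousAt F t₀ := hF.continuousAt (isOpen_Ioo.mem_nhds ht0)
      have hmem : Set.Ioo t₀ y ∈ 𝓝[>] t₀ := Ioo_mem_nhdsGT_of_mem ⟨le_refl _, ht.2⟩
      have hEq : F =ᶠ[𝓝[>] t₀] fun _ => F y := by
        filter_upwards [hmem] with z hz
        exact Eq.symm <| sub z y ⟨lt_trans ht0.1 hz.1, lt_trans hz.2 hy.2⟩ hy hz.2.le
          (fun h => lt_irrefl t₀ (lt_of_lt_of_le hz.1 h.1))
      have h2 : Filter.Tendsto F (𝓝[>] t₀) (𝓝 (F y)) :=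
        Filter.Tendsto.congr' hEq.symm tendsto_const_nhds
      have h3 : Filter.Tendsto F (𝓝[>] t₀) (𝓝 (F t₀)) :=
        hcont.continuousWithinAt.tendsto
      have := tendsto_nhds_unique h3 h2
      rw [h1] at this; exact this
    · exact (sub x y hx hy hxy ht).symm
  intro x hx y hy
  rcases le_total x y with h | h
  · exact claim x y hx hy h
  · exact (claim y x hy hx h).symm

/-- A self-intersection of a projective curve represented by a pair of independent
solutions of `u'' + q u = 0` with `q(t) = -3/(4t²) + q̃(t)` (q̃ continuous up to `0`),
forces the existence of a nontrivial solution vanishing both at `0` (in the limit) and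
at the self-intersection time `t*`. Here the solutions `g₁, g₂` with prescribed
asymptotics at the regular singular point are those provided by Bôcher's theorem. -/
theorem self_intersection_gives_vanishing_solution
    (T : ℝ) (hT : 0 < T) (q qt : ℝ → ℝ)
    (hq : ∀ t ∈ Set.Ioo 0 T, q t = -3 / (4 * t ^ 2) + qt t)
    (hqt : ContinuousOn qt (Set.Ico 0 T))
    (f : ℝ → Projectivization ℝ (ℝ × ℝ))
    (hf : ContinuousOn f (Set.Ico 0 T))
    (u₁ u₂ : ℝ → ℝ)
    (hu₁ : ContDiffOn ℝ 2 u₁ (Set.Ioo 0 T))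
    (hu₂ : ContDiffOn ℝ 2 u₂ (Set.Ioo 0 T))
    (hode₁ : ∀ t ∈ Set.Ioo 0 T, deriv (deriv u₁) t + q t * u₁ t = 0)
    (hode₂ : ∀ t ∈ Set.Ioo 0 T, deriv (deriv u₂) t + q t * u₂ t = 0)
    (hW : ∀ t ∈ Set.Ioo 0 T, u₁ t * deriv u₂ t - u₂ t * deriv u₁ t ≠ 0)
    (hrep : ∀ t ∈ Set.Ioo 0 T, ∃ h : ((u₁ t, u₂ t) : ℝ × ℝ) ≠ 0,
      f t = Projectivization.mk ℝ (u₁ t, u₂ t) h)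
    (g₁ g₂ gt₁ gt₂ : ℝ → ℝ)
    (hodeg₁ : ∀ t ∈ Set.Ioo 0 T, deriv (deriv g₁) t + q t * g₁ t = 0)
    (hodeg₂ : ∀ t ∈ Set.Ioo 0 T, deriv (deriv g₂) t + q t * g₂ t = 0)
    (hWg : ∀ t ∈ Set.Ioo 0 T, g₁ t * deriv g₂ t - g₂ t * deriv g₁ t ≠ 0)
    (hg₁ : ∀ t ∈ Set.Ioo 0 T, g₁ t = t ^ ((3 : ℝ) / 2) * gt₁ t)
    (hg₂ : ∀ t ∈ Set.Ioo 0 T, g₂ t = t ^ (-(1 : ℝ) / 2) * gt₂ t)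
    (hgt₁ : ContinuousOn gt₁ (Set.Ico 0 T))
    (hgt₂ : ContinuousOn gt₂ (Set.Ico 0 T))
    (hgt₁0 : gt₁ 0 = 1) (hgt₂0 : gt₂ 0 = 1)
    (tstar : ℝ) (hts : tstar ∈ Set.Ioo 0 T) (hself : f tstar = f 0) :
    ∃ u : ℝ → ℝ,
      (∃ t ∈ Set.Ioo 0 T, u t ≠ 0) ∧
      (∀ t ∈ Set.Ioo 0 T, deriv (deriv u) t + q t * u t = 0) ∧
      Filter.Tendsto u (nhdsWithin 0 (Set.Ioi 0)) (nhds 0) ∧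
      u tstar = 0 := by
  classical
  set A : ℝ := u₂ tstar with hA
  set B : ℝ := u₁ tstar with hB
  set U : ℝ → ℝ := fun t => A * u₁ t - B * u₂ t with hU
  have hIoo : IsOpen (Set.Ioo (0:ℝ) T) := isOpen_Ioo
  -- basic differentiability packages for u₁, u₂
  have hdu₁ : ∀ t ∈ Set.Ioo 0 T, HasDerivAt u₁ (deriv u₁ t) t := fun t ht =>
    ((hu₁.differentiableOn (by norm_num)).differentiableAt (hIoo.mem_nhds ht)).hasDerivAt
  have hdu₂ : ∀ t ∈ Set.Ioo 0 T, HasDerivAt u₂ (deriv u₂ t) t := fun t ht =>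
    ((hu₂.differentiableOn (by norm_num)).differentiableAt (hIoo.mem_nhds ht)).hasDerivAt
  have hcd₁ : ContDiffOn ℝ 1 (deriv u₁) (Set.Ioo 0 T) :=
    hu₁.deriv_of_isOpen hIoo (by norm_num)
  have hcd₂ : ContDiffOn ℝ 1 (deriv u₂) (Set.Ioo 0 T) :=
    hu₂.deriv_of_isOpen hIoo (by norm_num)
  have hddu₁ : ∀ t ∈ Set.Ioo 0 T, HasDerivAt (deriv u₁) (deriv (deriv u₁) t) t := fun t ht =>
    ((hcd₁.differentiableOn (by norm_num)).differentiableAt (hIoo.mem_nhds ht)).hasDerivAt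
  have hddu₂ : ∀ t ∈ Set.Ioo 0 T, HasDerivAt (deriv u₂) (deriv (deriv u₂) t) t := fun t ht =>
    ((hcd₂.differentiableOn (by norm_num)).differentiableAt (hIoo.mem_nhds ht)).hasDerivAt
  -- derivative of U
  have hdU : ∀ t ∈ Set.Ioo 0 T, HasDerivAt U (A * deriv u₁ t - B * deriv u₂ t) t := by
    intro t ht
    exact ((hdu₁ t ht).const_mul A).sub ((hdu₂ t ht).const_mul B)
  have hDU : ∀ t ∈ Set.Ioo 0 T, deriv U t = A * deriv u₁ t - B * deriv u₂ t := fun t ht =>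
    (hdU t ht).deriv
  -- the ODE for U
  have hodeU : ∀ t ∈ Set.Ioo 0 T, deriv (deriv U) t + q t * U t = 0 := by
    intro t ht
    have h2 : deriv U =ᶠ[𝓝 t] fun s => A * deriv u₁ s - B * deriv u₂ s :=
      Filter.eventuallyEq_of_mem (hIoo.mem_nhds ht) hDU
    have h3 : deriv (deriv U) t = A * deriv (deriv u₁) t - B * deriv (deriv u₂) t := by
      rw [h2.deriv_eq]
      exact (((hddu₁ t ht).const_mul A).sub ((hddu₂ t ht).const_mul B)).deriv
    have e1 := hode₁ t ht
    have e2 := hode₂ t ht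
    rw [h3, hU]
    simp only
    linear_combination A * e1 - B * e2
  -- choice of a good ε
  have hlle : 𝓝[>] (0:ℝ) ≤ 𝓝[Set.Ico 0 T] 0 :=
    nhdsWithin_le_of_mem (mem_of_superset (Ioo_mem_nhdsGT_of_mem ⟨le_refl 0, hT⟩)
      Set.Ioo_subset_Ico_self)
  set K : ℝ := |qt 0| + 1 with hK
  have hKpos : 0 < K := by positivity
  have hqt0 : Filter.Tendsto qt (𝓝[>] (0:ℝ)) (𝓝 (qt 0)) :=
    ((hqt 0 ⟨le_refl 0, hT⟩).mono_left hlle)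
  have hgt₁lim : Filter.Tendsto gt₁ (𝓝[>] (0:ℝ)) (𝓝 1) := by
    have := (hgt₁ 0 ⟨le_refl 0, hT⟩).mono_left hlle
    rwa [hgt₁0] at this
  have hgt₂lim : Filter.Tendsto gt₂ (𝓝[>] (0:ℝ)) (𝓝 1) := by
    have := (hgt₂ 0 ⟨le_refl 0, hT⟩).mono_left hlle
    rwa [hgt₂0] at this
  have ev1 : ∀ᶠ t in 𝓝[>] (0:ℝ), qt t < K :=
    hqt0.eventually (eventually_lt_nhds (by simp [hK]; linarith [le_abs_self (qt 0)]))
  have ev2 : ∀ᶠ t in 𝓝[>] (0:ℝ), 0 < gt₁ t :=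
    hgt₁lim.eventually (eventually_gt_nhds one_pos)
  have ev3 : ∀ᶠ t in 𝓝[>] (0:ℝ), 0 < gt₂ t :=
    hgt₂lim.eventually (eventually_gt_nhds one_pos)
  have ev4 : ∀ᶠ t in 𝓝[>] (0:ℝ), 4 * t ^ 2 * K < 3 := by
    have hcont : Filter.Tendsto (fun t : ℝ => 4 * t ^ 2 * K) (𝓝 0) (𝓝 (4 * 0 ^ 2 * K)) :=
      (Continuous.tendsto (by fun_prop) 0)
    have : Filter.Tendsto (fun t : ℝ => 4 * t ^ 2 * K) (𝓝[>] (0:ℝ)) (𝓝 0) := by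
      simpa using hcont.mono_left nhdsWithin_le_nhds
    exact this.eventually (eventually_lt_nhds (by norm_num))
  have ev5 : ∀ᶠ t in 𝓝[>] (0:ℝ), t ∈ Set.Ioo (0:ℝ) T :=
    Filter.eventually_of_mem (Ioo_mem_nhdsGT_of_mem ⟨le_refl 0, hT⟩) (fun t ht => ht)
  obtain ⟨ε, hεpos, hsub⟩ :=
    mem_nhdsGT_iff_exists_Ioo_subset.1 (ev1.and (ev2.and (ev3.and (ev4.and ev5))))
  have hεT' : Set.Ioo 0 ε ⊆ Set.Ioo 0 T := fun t ht => (hsub ht).2.2.2.2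
  have hεIco : Set.Ioo 0 ε ⊆ Set.Ico 0 T := fun t ht =>
    ⟨(ht.1).le, (hεT' ht).2⟩
  have hqneg : ∀ t ∈ Set.Ioo 0 ε, q t < 0 := by
    intro t ht
    obtain ⟨e1, _, _, e4, e5⟩ := hsub ht
    rw [hq t e5]
    have h4 : (0:ℝ) < 4 * t ^ 2 := by have := ht.1; positivity
    have h5 : K < 3 / (4 * t ^ 2) := by rw [lt_div_iff₀ h4]; linarith
    have h6 : -3 / (4 * t ^ 2) = -(3 / (4 * t ^ 2)) := by ring
    linarith
  have hg₁pos : ∀ t ∈ Set.Ioo 0 ε, 0 < g₁ t := by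
    intro t ht
    rw [hg₁ t (hεT' ht)]
    exact mul_pos (Real.rpow_pos_of_pos ht.1 _) (hsub ht).2.1
  have hg₂pos : ∀ t ∈ Set.Ioo 0 ε, 0 < g₂ t := by
    intro t ht
    rw [hg₂ t (hεT' ht)]
    exact mul_pos (Real.rpow_pos_of_pos ht.1 _) (hsub ht).2.2.1
  -- differentiability of deriv g₁, deriv g₂ on (0, ε)
  have hqg₁ : ∀ t ∈ Set.Ioo 0 ε, q t * g₁ t ≠ 0 := fun t ht =>
    (mul_neg_of_neg_of_pos (hqneg t ht) (hg₁pos t ht)).ne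
  have hqg₂ : ∀ t ∈ Set.Ioo 0 ε, q t * g₂ t ≠ 0 := fun t ht =>
    (mul_neg_of_neg_of_pos (hqneg t ht) (hg₂pos t ht)).ne
  have hdiffg₁ : ∀ t ∈ Set.Ioo 0 ε, DifferentiableAt ℝ (deriv g₁) t := by
    intro t ht
    by_contra hdiff
    have h0 := deriv_zero_of_not_differentiableAt hdiff
    have h1 := hodeg₁ t (hεT' ht)
    exact hqg₁ t ht (by linarith)
  have hdiffg₂ : ∀ t ∈ Set.Ioo 0 ε, DifferentiableAt ℝ (deriv g₂) t := by
    intro t ht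
    by_contra hdiff
    have h0 := deriv_zero_of_not_differentiableAt hdiff
    have h1 := hodeg₂ t (hεT' ht)
    exact hqg₂ t ht (by linarith)
  have hdg₁' : ∀ t ∈ Set.Ioo 0 ε, HasDerivAt (deriv g₁) (deriv (deriv g₁) t) t :=
    fun t ht => (hdiffg₁ t ht).hasDerivAt
  have hdg₂' : ∀ t ∈ Set.Ioo 0 ε, HasDerivAt (deriv g₂) (deriv (deriv g₂) t) t :=
    fun t ht => (hdiffg₂ t ht).hasDerivAt
  have hcderivg₁ : ContinuousOn (deriv g₁) (Set.Ioo 0 ε) := fun t ht =>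
    (hdiffg₁ t ht).continuousAt.continuousWithinAt
  have hcderivg₂ : ContinuousOn (deriv g₂) (Set.Ioo 0 ε) := fun t ht =>
    (hdiffg₂ t ht).continuousAt.continuousWithinAt
  -- strict monotonicity of deriv g₁, deriv g₂ on (0, ε)
  have hsm₁ : StrictMonoOn (deriv g₁) (Set.Ioo 0 ε) := by
    apply strictMonoOn_of_deriv_pos (convex_Ioo 0 ε) hcderivg₁
    intro x hx
    rw [interior_Ioo] at hx
    have h1 := hodeg₁ x (hεT' hx)
    have h2 : deriv (deriv g₁) x = -(q x * g₁ x) := by linarith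
    rw [h2]
    exact neg_pos.2 (mul_neg_of_neg_of_pos (hqneg x hx) (hg₁pos x hx))
  have hsm₂ : StrictMonoOn (deriv g₂) (Set.Ioo 0 ε) := by
    apply strictMonoOn_of_deriv_pos (convex_Ioo 0 ε) hcderivg₂
    intro x hx
    rw [interior_Ioo] at hx
    have h1 := hodeg₂ x (hεT' hx)
    have h2 : deriv (deriv g₂) x = -(q x * g₂ x) := by linarith
    rw [h2]
    exact neg_pos.2 (mul_neg_of_neg_of_pos (hqneg x hx) (hg₂pos x hx))
  -- g₁, g₂ are differentiable away from at most one point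
  obtain ⟨t₁, ht₁⟩ : ∃ t₁ : ℝ, ∀ t ∈ Set.Ioo 0 ε, t ≠ t₁ → deriv g₁ t ≠ 0 := by
    by_cases h : ∃ s0 ∈ Set.Ioo (0:ℝ) ε, deriv g₁ s0 = 0
    · obtain ⟨s0, hs0, hs0'⟩ := h
      exact ⟨s0, fun t ht hne hzero => hne (hsm₁.injOn ht hs0 (by rw [hzero, hs0']))⟩
    · push_neg at h; exact ⟨0, fun t ht _ => h t ht⟩
  obtain ⟨t₂, ht₂⟩ : ∃ t₂ : ℝ, ∀ t ∈ Set.Ioo 0 ε, t ≠ t₂ → deriv g₂ t ≠ 0 := by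
    by_cases h : ∃ s0 ∈ Set.Ioo (0:ℝ) ε, deriv g₂ s0 = 0
    · obtain ⟨s0, hs0, hs0'⟩ := h
      exact ⟨s0, fun t ht hne hzero => hne (hsm₂.injOn ht hs0 (by rw [hzero, hs0']))⟩
    · push_neg at h; exact ⟨0, fun t ht _ => h t ht⟩
  have hgd₁ : ∀ t ∈ Set.Ioo 0 ε, t ≠ t₁ → HasDerivAt g₁ (deriv g₁ t) t := by
    intro t ht hne
    by_cases hdiff : DifferentiableAt ℝ g₁ t
    · exact hdiff.hasDerivAt
    · exact absurd (deriv_zero_of_not_differentiableAt hdiff) (ht₁ t ht hne)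
  have hgd₂ : ∀ t ∈ Set.Ioo 0 ε, t ≠ t₂ → HasDerivAt g₂ (deriv g₂ t) t := by
    intro t ht hne
    by_cases hdiff : DifferentiableAt ℝ g₂ t
    · exact hdiff.hasDerivAt
    · exact absurd (deriv_zero_of_not_differentiableAt hdiff) (ht₂ t ht hne)
  -- continuity of g₁, g₂ on (0, ε)
  have hrpow : ∀ y : ℝ, ContinuousOn (fun t : ℝ => t ^ y) (Set.Ioo 0 ε) := fun y t ht =>
    (Real.continuousAt_rpow_const t y (Or.inl ht.1.ne')).continuousWithinAt
  have hgc₁ : ContinuousOn g₁ (Set.Ioo 0 ε) := by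
    have h1 : ContinuousOn (fun t : ℝ => t ^ ((3:ℝ)/2) * gt₁ t) (Set.Ioo 0 ε) :=
      (hrpow _).mul (hgt₁.mono hεIco)
    exact h1.congr (fun t ht => hg₁ t (hεT' ht))
  have hgc₂ : ContinuousOn g₂ (Set.Ioo 0 ε) := by
    have h1 : ContinuousOn (fun t : ℝ => t ^ (-(1:ℝ)/2) * gt₂ t) (Set.Ioo 0 ε) :=
      (hrpow _).mul (hgt₂.mono hεIco)
    exact h1.congr (fun t ht => hg₂ t (hεT' ht))
  have hcu₁ : ContinuousOn u₁ (Set.Ioo 0 ε) := (hu₁.continuousOn).mono hεT'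
  have hcu₂ : ContinuousOn u₂ (Set.Ioo 0 ε) := (hu₂.continuousOn).mono hεT'
  have hcdu₁ : ContinuousOn (deriv u₁) (Set.Ioo 0 ε) := hcd₁.continuousOn.mono hεT'
  have hcdu₂ : ContinuousOn (deriv u₂) (Set.Ioo 0 ε) := hcd₂.continuousOn.mono hεT'
  -- second derivative values
  have e2u₁ : ∀ t ∈ Set.Ioo 0 ε, deriv (deriv u₁) t = -(q t * u₁ t) := fun t ht => by
    have := hode₁ t (hεT' ht); linarith
  have e2u₂ : ∀ t ∈ Set.Ioo 0 ε, deriv (deriv u₂) t = -(q t * u₂ t) := fun t ht => by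
    have := hode₂ t (hεT' ht); linarith
  have e2g₁ : ∀ t ∈ Set.Ioo 0 ε, deriv (deriv g₁) t = -(q t * g₁ t) := fun t ht => by
    have := hodeg₁ t (hεT' ht); linarith
  have e2g₂ : ∀ t ∈ Set.Ioo 0 ε, deriv (deriv g₂) t = -(q t * g₂ t) := fun t ht => by
    have := hodeg₂ t (hεT' ht); linarith
  -- Wronskian constancy
  have hWuconst : ∀ x ∈ Set.Ioo 0 ε, ∀ y ∈ Set.Ioo 0 ε,
      u₁ x * deriv u₂ x - u₂ x * deriv u₁ x = u₁ y * deriv u₂ y - u₂ y * deriv u₁ y := by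
    apply constOn_aux (t₀ := 0)
    · exact (hcu₁.mul hcdu₂).sub (hcu₂.mul hcdu₁)
    · intro t ht _
      have H := ((hdu₁ t (hεT' ht)).mul (hddu₂ t (hεT' ht))).sub
        ((hdu₂ t (hεT' ht)).mul (hddu₁ t (hεT' ht)))
      have hval : deriv u₁ t * deriv u₂ t + u₁ t * deriv (deriv u₂) t -
          (deriv u₂ t * deriv u₁ t + u₂ t * deriv (deriv u₁) t) = 0 := by
        rw [e2u₁ t ht, e2u₂ t ht]; ring
      rw [hval] at H
      exact H
  have hPconst : ∀ x ∈ Set.Ioo 0 ε, ∀ y ∈ Set.Ioo 0 ε,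
      g₁ x * deriv u₂ x - deriv g₁ x * u₂ x = g₁ y * deriv u₂ y - deriv g₁ y * u₂ y := by
    apply constOn_aux (t₀ := t₁)
    · exact (hgc₁.mul hcdu₂).sub (hcderivg₁.mul hcu₂)
    · intro t ht hne
      have H := ((hgd₁ t ht hne).mul (hddu₂ t (hεT' ht))).sub
        ((hdg₁' t ht).mul (hdu₂ t (hεT' ht)))
      have hval : deriv g₁ t * deriv u₂ t + g₁ t * deriv (deriv u₂) t -
          (deriv (deriv g₁) t * u₂ t + deriv g₁ t * deriv u₂ t) = 0 := by
        rw [e2g₁ t ht, e2u₂ t ht]; ring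
      rw [hval] at H
      exact H
  have hQconst : ∀ x ∈ Set.Ioo 0 ε, ∀ y ∈ Set.Ioo 0 ε,
      u₁ x * deriv g₁ x - deriv u₁ x * g₁ x = u₁ y * deriv g₁ y - deriv u₁ y * g₁ y := by
    apply constOn_aux (t₀ := t₁)
    · exact (hcu₁.mul hcderivg₁).sub (hcdu₁.mul hgc₁)
    · intro t ht hne
      have H := ((hdu₁ t (hεT' ht)).mul (hdg₁' t ht)).sub
        ((hddu₁ t (hεT' ht)).mul (hgd₁ t ht hne))
      have hval : deriv u₁ t * deriv g₁ t + u₁ t * deriv (deriv g₁) t -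
          (deriv (deriv u₁) t * g₁ t + deriv u₁ t * deriv g₁ t) = 0 := by
        rw [e2g₁ t ht, e2u₁ t ht]; ring
      rw [hval] at H
      exact H
  have hRconst : ∀ x ∈ Set.Ioo 0 ε, ∀ y ∈ Set.Ioo 0 ε,
      g₂ x * deriv u₂ x - deriv g₂ x * u₂ x = g₂ y * deriv u₂ y - deriv g₂ y * u₂ y := by
    apply constOn_aux (t₀ := t₂)
    · exact (hgc₂.mul hcdu₂).sub (hcderivg₂.mul hcu₂)
    · intro t ht hne
      have H := ((hgd₂ t ht hne).mul (hddu₂ t (hεT' ht))).sub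
        ((hdg₂' t ht).mul (hdu₂ t (hεT' ht)))
      have hval : deriv g₂ t * deriv u₂ t + g₂ t * deriv (deriv u₂) t -
          (deriv (deriv g₂) t * u₂ t + deriv g₂ t * deriv u₂ t) = 0 := by
        rw [e2g₂ t ht, e2u₂ t ht]; ring
      rw [hval] at H
      exact H
  have hSconst : ∀ x ∈ Set.Ioo 0 ε, ∀ y ∈ Set.Ioo 0 ε,
      u₁ x * deriv g₂ x - deriv u₁ x * g₂ x = u₁ y * deriv g₂ y - deriv u₁ y * g₂ y := by
    apply constOn_aux (t₀ := t₂)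
    · exact (hcu₁.mul hcderivg₂).sub (hcdu₁.mul hgc₂)
    · intro t ht hne
      have H := ((hdu₁ t (hεT' ht)).mul (hdg₂' t ht)).sub
        ((hddu₁ t (hεT' ht)).mul (hgd₂ t ht hne))
      have hval : deriv u₁ t * deriv g₂ t + u₁ t * deriv (deriv g₂) t -
          (deriv (deriv u₁) t * g₂ t + deriv u₁ t * deriv g₂ t) = 0 := by
        rw [e2g₂ t ht, e2u₁ t ht]; ring
      rw [hval] at H
      exact H
  -- evaluate constants at c := ε/2
  have hε0 : (0:ℝ) < ε := Set.mem_Ioi.mp hεpos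
  have hc : (ε/2) ∈ Set.Ioo 0 ε := ⟨by linarith, by linarith⟩
  set c : ℝ := ε/2 with hcdef
  set p : ℝ := g₁ c * deriv u₂ c - deriv g₁ c * u₂ c with hpdef
  set q' : ℝ := u₁ c * deriv g₁ c - deriv u₁ c * g₁ c with hq'def
  set r : ℝ := g₂ c * deriv u₂ c - deriv g₂ c * u₂ c with hrdef
  set s : ℝ := u₁ c * deriv g₂ c - deriv u₁ c * g₂ c with hsdef
  set w : ℝ := u₁ c * deriv u₂ c - u₂ c * deriv u₁ c with hwdef
  set δ : ℝ := p * s - r * q' with hδdef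
  have hwne : w ≠ 0 := hW c (hεT' hc)
  have hδeq : δ = (g₁ c * deriv g₂ c - g₂ c * deriv g₁ c) * w := by
    rw [hδdef, hpdef, hq'def, hrdef, hsdef, hwdef]; ring
  have hδ : δ ≠ 0 := by rw [hδeq]; exact mul_ne_zero (hWg c (hεT' hc)) hwne
  -- linear system
  have eq1 : ∀ t ∈ Set.Ioo 0 ε, p * u₁ t + q' * u₂ t = g₁ t * w := by
    intro t ht
    have hPt : g₁ t * deriv u₂ t - deriv g₁ t * u₂ t = p := by
      rw [hpdef]; exact hPconst t ht c hc
    have hQt : u₁ t * deriv g₁ t - deriv u₁ t * g₁ t = q' := by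
      rw [hq'def]; exact hQconst t ht c hc
    have hWt : u₁ t * deriv u₂ t - u₂ t * deriv u₁ t = w := by
      rw [hwdef]; exact hWuconst t ht c hc
    rw [← hPt, ← hQt, ← hWt]
    ring
  have eq2 : ∀ t ∈ Set.Ioo 0 ε, r * u₁ t + s * u₂ t = g₂ t * w := by
    intro t ht
    have hRt : g₂ t * deriv u₂ t - deriv g₂ t * u₂ t = r := by
      rw [hrdef]; exact hRconst t ht c hc
    have hSt : u₁ t * deriv g₂ t - deriv u₁ t * g₂ t = s := by
      rw [hsdef]; exact hSconst t ht c hc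
    have hWt : u₁ t * deriv u₂ t - u₂ t * deriv u₁ t = w := by
      rw [hwdef]; exact hWuconst t ht c hc
    rw [← hRt, ← hSt, ← hWt]
    ring
  set A₁ : ℝ := w * s with hA₁def
  set B₁ : ℝ := -(w * q') with hB₁def
  set A₂ : ℝ := -(w * r) with hA₂def
  set B₂ : ℝ := w * p with hB₂def
  have h5₁ : ∀ t ∈ Set.Ioo 0 ε, δ * u₁ t = A₁ * g₁ t + B₁ * g₂ t := by
    intro t ht
    have e1 := eq1 t ht; have e2 := eq2 t ht
    rw [hδdef, hA₁def, hB₁def]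
    linear_combination s * e1 - q' * e2
  have h5₂ : ∀ t ∈ Set.Ioo 0 ε, δ * u₂ t = A₂ * g₁ t + B₂ * g₂ t := by
    intro t ht
    have e1 := eq1 t ht; have e2 := eq2 t ht
    rw [hδdef, hA₂def, hB₂def]
    linear_combination p * e2 - r * e1
  have hBne : ((B₁, B₂) : ℝ × ℝ) ≠ 0 := by
    intro h
    have h1 : B₁ = 0 := by simpa using congrArg Prod.fst h
    have h2 : B₂ = 0 := by simpa using congrArg Prod.snd h
    rw [hB₁def, neg_eq_zero] at h1
    rw [hB₂def] at h2
    have hq'0 : q' = 0 := by rcases mul_eq_zero.1 h1 with h | h; exact absurd h hwne; exact h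
    have hp0 : p = 0 := by rcases mul_eq_zero.1 h2 with h | h; exact absurd h hwne; exact h
    exact hδ (by rw [hδdef, hq'0, hp0]; ring)
  -- scaled limits at 0⁺
  have hscaled₁ : ∀ t ∈ Set.Ioo 0 ε,
      t ^ ((1:ℝ)/2) * (δ * u₁ t) = A₁ * (t ^ 2 * gt₁ t) + B₁ * gt₂ t := by
    intro t ht
    have ht0 : (0:ℝ) < t := ht.1
    have e₁ : t ^ ((1:ℝ)/2) * t ^ ((3:ℝ)/2) = t ^ 2 := by
      rw [← Real.rpow_add ht0, show ((1:ℝ)/2 + 3/2) = (2:ℝ) by norm_num, Real.rpow_two]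
    have e₂ : t ^ ((1:ℝ)/2) * t ^ (-(1:ℝ)/2) = 1 := by
      rw [← Real.rpow_add ht0, show ((1:ℝ)/2 + -1/2) = (0:ℝ) by norm_num, Real.rpow_zero]
    rw [h5₁ t ht, hg₁ t (hεT' ht), hg₂ t (hεT' ht)]
    linear_combination (A₁ * gt₁ t) * e₁ + (B₁ * gt₂ t) * e₂
  have hscaled₂ : ∀ t ∈ Set.Ioo 0 ε,
      t ^ ((1:ℝ)/2) * (δ * u₂ t) = A₂ * (t ^ 2 * gt₁ t) + B₂ * gt₂ t := by
    intro t ht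
    have ht0 : (0:ℝ) < t := ht.1
    have e₁ : t ^ ((1:ℝ)/2) * t ^ ((3:ℝ)/2) = t ^ 2 := by
      rw [← Real.rpow_add ht0, show ((1:ℝ)/2 + 3/2) = (2:ℝ) by norm_num, Real.rpow_two]
    have e₂ : t ^ ((1:ℝ)/2) * t ^ (-(1:ℝ)/2) = 1 := by
      rw [← Real.rpow_add ht0, show ((1:ℝ)/2 + -1/2) = (0:ℝ) by norm_num, Real.rpow_zero]
    rw [h5₂ t ht, hg₁ t (hεT' ht), hg₂ t (hεT' ht)]
    linear_combination (A₂ * gt₁ t) * e₁ + (B₂ * gt₂ t) * e₂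
  have hIooε : Set.Ioo (0:ℝ) ε ∈ 𝓝[>] (0:ℝ) := Ioo_mem_nhdsGT_of_mem ⟨le_refl 0, hεpos⟩
  have htsq : Filter.Tendsto (fun t : ℝ => t ^ 2 * gt₁ t) (𝓝[>] (0:ℝ)) (𝓝 0) := by
    have h1 : Filter.Tendsto (fun t : ℝ => t ^ 2) (𝓝[>] (0:ℝ)) (𝓝 0) := by
      have := ((continuous_pow 2).tendsto (0:ℝ)).mono_left (nhdsWithin_le_nhds (s := Set.Ioi 0))
      simpa using this
    simpa using h1.mul hgt₁lim
  have hlim₁ : Filter.Tendsto (fun t => t ^ ((1:ℝ)/2) * (δ * u₁ t)) (𝓝[>] (0:ℝ)) (𝓝 B₁) := by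
    have h2 : Filter.Tendsto (fun t : ℝ => A₁ * (t ^ 2 * gt₁ t) + B₁ * gt₂ t)
        (𝓝[>] (0:ℝ)) (𝓝 (A₁ * 0 + B₁ * 1)) :=
      ((htsq.const_mul A₁).add (hgt₂lim.const_mul B₁))
    rw [show A₁ * 0 + B₁ * 1 = B₁ by ring] at h2
    exact h2.congr' (by filter_upwards [hIooε] with t ht; exact (hscaled₁ t ht).symm)
  have hlim₂ : Filter.Tendsto (fun t => t ^ ((1:ℝ)/2) * (δ * u₂ t)) (𝓝[>] (0:ℝ)) (𝓝 B₂) := by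
    have h2 : Filter.Tendsto (fun t : ℝ => A₂ * (t ^ 2 * gt₁ t) + B₂ * gt₂ t)
        (𝓝[>] (0:ℝ)) (𝓝 (A₂ * 0 + B₂ * 1)) :=
      ((htsq.const_mul A₂).add (hgt₂lim.const_mul B₂))
    rw [show A₂ * 0 + B₂ * 1 = B₂ by ring] at h2
    exact h2.congr' (by filter_upwards [hIooε] with t ht; exact (hscaled₂ t ht).symm)
  -- the phi function along f
  have hBpos : 0 < B₁ ^ 2 + B₂ ^ 2 := sq_add_sq_pos' hBne
  have hφf : ∀ t ∈ Set.Ioo 0 ε, phiAux A B (f t)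
      = (A * (t ^ ((1:ℝ)/2) * (δ * u₁ t)) - B * (t ^ ((1:ℝ)/2) * (δ * u₂ t))) ^ 2 /
        ((t ^ ((1:ℝ)/2) * (δ * u₁ t)) ^ 2 + (t ^ ((1:ℝ)/2) * (δ * u₂ t)) ^ 2) := by
    intro t ht
    obtain ⟨hv, hft⟩ := hrep t (hεT' ht)
    rw [hft, phiAux_mk]
    have hk : t ^ ((1:ℝ)/2) * δ ≠ 0 :=
      mul_ne_zero (Real.rpow_pos_of_pos ht.1 _).ne' hδ
    have hxy : 0 < (u₁ t) ^ 2 + (u₂ t) ^ 2 := sq_add_sq_pos' hv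
    have := phi_scale A B (t ^ ((1:ℝ)/2) * δ) (u₁ t) (u₂ t) hk hxy
    simp only [mul_assoc] at this ⊢
    rw [this]
  have hφlim1 : Filter.Tendsto (fun t => phiAux A B (f t)) (𝓝[>] (0:ℝ))
      (𝓝 ((A * B₁ - B * B₂) ^ 2 / (B₁ ^ 2 + B₂ ^ 2))) := by
    have hnum : Filter.Tendsto
        (fun t => (A * (t ^ ((1:ℝ)/2) * (δ * u₁ t)) - B * (t ^ ((1:ℝ)/2) * (δ * u₂ t))) ^ 2)
        (𝓝[>] (0:ℝ)) (𝓝 ((A * B₁ - B * B₂) ^ 2)) :=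
      (((hlim₁.const_mul A).sub (hlim₂.const_mul B)).pow 2)
    have hden : Filter.Tendsto
        (fun t => (t ^ ((1:ℝ)/2) * (δ * u₁ t)) ^ 2 + (t ^ ((1:ℝ)/2) * (δ * u₂ t)) ^ 2)
        (𝓝[>] (0:ℝ)) (𝓝 (B₁ ^ 2 + B₂ ^ 2)) :=
      ((hlim₁.pow 2).add (hlim₂.pow 2))
    have := hnum.div hden hBpos.ne'
    exact this.congr' (by filter_upwards [hIooε] with t ht; exact (hφf t ht).symm)
  have hφlim2 : Filter.Tendsto (fun t => phiAux A B (f t)) (𝓝[>] (0:ℝ)) (𝓝 0) := by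
    have hftend : Filter.Tendsto f (𝓝[>] (0:ℝ)) (𝓝 (f 0)) :=
      (hf 0 ⟨le_refl 0, hT⟩).mono_left hlle
    have hcomp : Filter.Tendsto (fun t => phiAux A B (f t)) (𝓝[>] (0:ℝ))
        (𝓝 (phiAux A B (f 0))) :=
      ((phiAux_continuous A B).continuousAt.tendsto).comp hftend
    have hzero : phiAux A B (f 0) = 0 := by
      rw [← hself]
      obtain ⟨hv, hfts⟩ := hrep tstar hts
      rw [hfts, phiAux_mk]
      have : A * (u₁ tstar, u₂ tstar).1 - B * (u₁ tstar, u₂ tstar).2 = 0 := by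
        simp only [hA, hB]; ring
      rw [this]
      simp
    rwa [hzero] at hcomp
  have hβ : A * B₁ - B * B₂ = 0 := by
    have h0 := tendsto_nhds_unique hφlim1 hφlim2
    have h1 : (A * B₁ - B * B₂) ^ 2 = 0 := by
      rcases div_eq_zero_iff.1 h0 with h | h
      · exact h
      · exact absurd h hBpos.ne'
    exact pow_eq_zero_iff (by norm_num) |>.1 h1
  -- U is a multiple of g₁ near 0
  have hUrep : ∀ t ∈ Set.Ioo 0 ε, U t = ((A * A₁ - B * A₂)/δ) * (t ^ ((3:ℝ)/2) * gt₁ t) := by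
    intro t ht
    have h1 := h5₁ t ht
    have h2 := h5₂ t ht
    have h3 : δ * U t = (A * A₁ - B * A₂) * g₁ t := by
      rw [hU]; simp only
      linear_combination A * h1 - B * h2 + g₂ t * hβ
    rw [← hg₁ t (hεT' ht)]
    field_simp
    linear_combination h3
  have hUtend : Filter.Tendsto U (𝓝[>] (0:ℝ)) (𝓝 0) := by
    have hrpowlim : Filter.Tendsto (fun t : ℝ => t ^ ((3:ℝ)/2)) (𝓝[>] (0:ℝ)) (𝓝 0) := by
      have h1 : ContinuousAt (fun t : ℝ => t ^ ((3:ℝ)/2)) 0 :=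
        Real.continuousAt_rpow_const 0 _ (Or.inr (by norm_num))
      have := h1.tendsto.mono_left (nhdsWithin_le_nhds (s := Set.Ioi 0))
      simpa [Real.zero_rpow (by norm_num : ((3:ℝ)/2) ≠ 0)] using this
    have h2 : Filter.Tendsto (fun t => ((A * A₁ - B * A₂)/δ) * (t ^ ((3:ℝ)/2) * gt₁ t))
        (𝓝[>] (0:ℝ)) (𝓝 (((A * A₁ - B * A₂)/δ) * (0 * 1))) :=
      ((hrpowlim.mul hgt₁lim).const_mul _)
    rw [show ((A * A₁ - B * A₂)/δ) * ((0:ℝ) * 1) = 0 by ring] at h2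
    exact h2.congr' (by filter_upwards [hIooε] with t ht; exact (hUrep t ht).symm)
  -- nontriviality
  have hnontriv : ∃ t ∈ Set.Ioo 0 T, U t ≠ 0 := by
    by_contra h
    push_neg at h
    have hUc : A * u₁ c - B * u₂ c = 0 := h c (hεT' hc)
    have hdUc : A * deriv u₁ c - B * deriv u₂ c = 0 := by
      have hev : U =ᶠ[𝓝 c] fun _ => 0 :=
        Filter.eventuallyEq_of_mem (hIoo.mem_nhds (hεT' hc)) h
      have := hev.deriv_eq
      rw [deriv_const] at this
      rw [← hDU c (hεT' hc)]
      exact this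
    have hA0 : A = 0 := by
      have h1 : A * w = 0 := by
        rw [hwdef]
        linear_combination (deriv u₂ c) * hUc - u₂ c * hdUc
      rcases mul_eq_zero.1 h1 with h | h
      · exact h
      · exact absurd h hwne
    have hB0 : B = 0 := by
      have h1 : B * w = 0 := by
        rw [hwdef]
        linear_combination (deriv u₁ c) * hUc - u₁ c * hdUc
      rcases mul_eq_zero.1 h1 with h | h
      · exact h
      · exact absurd h hwne
    obtain ⟨hv, _⟩ := hrep tstar hts
    exact hv (by rw [← hB, ← hA, hA0, hB0]; rfl)
  exact ⟨U, hnontriv, hodeU, hUtend, by rw [hU]; simp only; rw [hA, hB]; ring⟩
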